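/- Let σ = ⊗ₙ ad(uₙ) be the shift automorphism on the universal UHF algebra 𝒰 = ⊗_{n≥1} Mₙ, where uₙ ∈ Mₙ is the cyclic permutation unitary with uₙ* e^{(n)}_{i,i} uₙ = e^{(n)}_{i+1,i+1} (indices mod n). Then σ has the cyclic Rokhlin property: for any integer k > 0, any ε > 0 and any finite subset F ⊂ 𝒰, there exist mutually orthogonal projections e₁, ..., e_k ∈ 𝒰 with Σᵢeᵢ = 1, ‖x eᵢ − eᵢ x‖ < ε for all x ∈ F, and σ(eᵢ) = e_{i+1} exactly for i = 1, ..., k (with e_{k+1} = e₁). -/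

import Mathlib

/-!
STATEMENT 16: The shift automorphism `σ = ⊗ₙ ad(uₙ)` of the universal UHF algebra
`𝒰 = ⊗_{n≥1} Mₙ` has the cyclic Rokhlin property, with the projections permuted
*exactly*: `σ(eᵢ) = e_{i+1}`.  The universal UHF algebra with its shift is presented
abstractly as a C*-algebra with commuting unital embeddings of all matrix algebras
whose union is dense, and an automorphism conjugating each factor by the cyclic
permutation unitary.
-/

open scoped Matrix.Norms.L2Operator BigOperators

noncomputable instance (n : ℕ) : CStarAlgebra (Matrix (Fin n) (Fin n) ℂ) :=
  { Matrix.instL2OpNormedRing, Matrix.instCStarRing, Matrix.instL2OpNormedAlgebra with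
    star_mul := star_mul
    star_add := star_add
    complete := CompleteSpace.complete
    star_smul := star_smul }

/-- The cyclic permutation matrix `uₙ ∈ Mₙ₊₁` with `uₙ* e_{i,i} uₙ = e_{i+1,i+1}`. -/
def cyclicPermMatrix (n : ℕ) : Matrix (Fin (n + 1)) (Fin (n + 1)) ℂ :=
  fun i j => if i = j + 1 then 1 else 0

/-- The universal UHF algebra `𝒰 = ⊗_{n ≥ 1} Mₙ` together with its shift
automorphism `σ = ⊗ₙ ad(uₙ)`, presented abstractly. -/
structure UHFShift (U : Type*) [CStarAlgebra U] where
  ι : ∀ n : ℕ, Matrix (Fin (n + 1)) (Fin (n + 1)) ℂ →⋆ₐ[ℂ] U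
  inj : ∀ n, Function.Injective (ι n)
  commuting : ∀ m n, m ≠ n → ∀ x y, Commute (ι m x) (ι n y)
  dense : Dense ((StarAlgebra.adjoin ℂ (⋃ n, Set.range (ι n)) : StarSubalgebra ℂ U) : Set U)
  σ : U ≃⋆ₐ[ℂ] U
  shift : ∀ n x, σ (ι n x) =
    ι n (star (cyclicPermMatrix n) * x * cyclicPermMatrix n)

/-- A projection in a C*-algebra. -/
def IsProjection {A : Type*} [CStarAlgebra A] (p : A) : Prop := p * p = p ∧ star p = p

lemma my_conj_diag (n : ℕ) (f : Fin (n+1) → ℂ) :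
    star (cyclicPermMatrix n) * Matrix.diagonal f * cyclicPermMatrix n
      = Matrix.diagonal (fun a => f (a+1)) := by
  ext a b
  simp only [Matrix.mul_apply, Matrix.star_apply, cyclicPermMatrix, Matrix.diagonal_apply,
    apply_ite (star : ℂ → ℂ), star_one, star_zero, ite_mul, one_mul, zero_mul,
    Finset.sum_ite_eq, Finset.mem_univ, if_true, mul_ite, mul_one, mul_zero]
  rw [Finset.sum_ite_eq' Finset.univ (b+1)]
  simp only [Finset.mem_univ, if_true, Finset.sum_ite_eq', Finset.sum_ite_eq]
  by_cases h : a = b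
  · subst h; simp
  · rw [if_neg (fun h' : b + 1 = a + 1 => h (add_right_cancel h').symm), if_neg h]

lemma my_mod_cast (k m x : ℕ) (h : k ∣ m) : ((x % m : ℕ) : ZMod k) = x := by
  conv_rhs => rw [← Nat.div_add_mod x m]
  push_cast
  rw [(ZMod.natCast_eq_zero_iff m k).2 h]
  ring

lemma my_proj_norm {A : Type*} [CStarAlgebra A] {p : A} (h1 : p * p = p) (h2 : star p = p) :
    ‖p‖ ≤ 1 := by
  have h := CStarRing.norm_star_mul_self (x := p)
  rw [h2, h1] at h
  nlinarith [norm_nonneg p]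

theorem uhf_shift_cyclic_rokhlin (U : Type*) [CStarAlgebra U] (S : UHFShift U) :
    ∀ (k : ℕ) [NeZero k], ∀ ε : ℝ, 0 < ε → ∀ F : Finset U,
      ∃ e : ZMod k → U,
        (∀ i, IsProjection (e i)) ∧
        (∀ i j, i ≠ j → e i * e j = 0) ∧
        (∑ i, e i) = 1 ∧
        (∀ x ∈ F, ∀ i, ‖x * e i - e i * x‖ < ε) ∧
        (∀ i, S.σ (e i) = e (i + 1)) := by
  intro k _ ε hε F
  classical
  -- Step 1: approximate each element of F by an element of the finite stages.
  have happrox : ∀ x ∈ F, ∃ y : U, ‖x - y‖ < ε/2 ∧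
      ∃ N : ℕ, ∀ M, N ≤ M → ∀ z, Commute y (S.ι M z) := by
    intro x hx
    obtain ⟨y, hy, hyd⟩ := Metric.mem_closure_iff.1 (S.dense x) (ε/2) (by linarith)
    refine ⟨y, by rwa [← dist_eq_norm], ?_⟩
    have hy' : y ∈ StarAlgebra.adjoin ℂ (⋃ n, Set.range (S.ι n)) := hy
    refine StarAlgebra.adjoin_induction
      (p := fun a _ => ∃ N : ℕ, ∀ M, N ≤ M → ∀ z, Commute a (S.ι M z))
      ?_ ?_ ?_ ?_ ?_ hy'
    · rintro a ha
      obtain ⟨_, ⟨n, rfl⟩, z, rfl⟩ := ha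
      exact ⟨n + 1, fun M hM w => S.commuting n M (by omega) z w⟩
    · exact fun r => ⟨0, fun M _ z => Algebra.commutes r (S.ι M z)⟩
    · rintro a b _ _ ⟨Na, hNa⟩ ⟨Nb, hNb⟩
      exact ⟨max Na Nb, fun M hM z =>
        (hNa M (le_trans (le_max_left _ _) hM) z).add_left
          (hNb M (le_trans (le_max_right _ _) hM) z)⟩
    · rintro a b _ _ ⟨Na, hNa⟩ ⟨Nb, hNb⟩
      exact ⟨max Na Nb, fun M hM z =>
        (hNa M (le_trans (le_max_left _ _) hM) z).mul_left
          (hNb M (le_trans (le_max_right _ _) hM) z)⟩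
    · rintro a _ ⟨Na, hNa⟩
      refine ⟨Na, fun M hM z => ?_⟩
      have := (hNa M hM (star z)).star_star
      rwa [map_star, star_star] at this
  choose y hy N hN using happrox
  -- Step 2: choose a large factor of size divisible by k.
  set N' : ℕ := F.attach.sup (fun x => N x.1 x.2) with hN'def
  have hk : k ≠ 0 := NeZero.ne k
  have hkpos : 0 < k * (N' + 1) := Nat.mul_pos (Nat.pos_of_ne_zero hk) (Nat.succ_pos _)
  set n : ℕ := k * (N' + 1) - 1 with hndef
  have hsize : n + 1 = k * (N' + 1) := Nat.succ_pred_eq_of_pos hkpos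
  have hdvd : k ∣ n + 1 := hsize ▸ Dvd.intro _ rfl
  have hNn : N' ≤ n := by
    have : N' + 1 ≤ k * (N' + 1) := Nat.le_mul_of_pos_left _ (Nat.pos_of_ne_zero hk)
    omega
  -- the cast lemma
  have hcast : ∀ a : Fin (n + 1), ((((a + 1 : Fin (n+1)).val) : ℕ) : ZMod k)
      = (a.val : ZMod k) + 1 := by
    intro a
    have h1 : (a + 1 : Fin (n+1)).val = (a.val + (1 : Fin (n+1)).val) % (n+1) := rfl
    rw [h1, my_mod_cast k (n+1) _ hdvd, Fin.val_one']
    push_cast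
    rw [my_mod_cast k (n+1) _ hdvd]
    push_cast
    ring
  -- Step 3: define the projections.
  set f : ZMod k → Fin (n+1) → ℂ :=
    fun i a => if ((a.val : ZMod k) + i = 0) then 1 else 0 with hfdef
  set e : ZMod k → U := fun i => S.ι n (Matrix.diagonal (f i)) with hedef
  have hproj : ∀ i, Matrix.diagonal (f i) * Matrix.diagonal (f i) = Matrix.diagonal (f i) := by
    intro i
    have hmul : (fun a => f i a * f i a) = f i := by
      funext a
      by_cases h : ((a.val : ZMod k) + i = 0) <;> simp [hfdef, h]
    rw [Matrix.diagonal_mul_diagonal, hmul]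
  have hsa : ∀ i, star (Matrix.diagonal (f i)) = Matrix.diagonal (f i) := by
    intro i
    have hst : star (f i) = f i := by
      funext a
      by_cases h : ((a.val : ZMod k) + i = 0) <;> simp [hfdef, h]
    rw [Matrix.star_eq_conjTranspose, Matrix.diagonal_conjTranspose, hst]
  refine ⟨e, ?_, ?_, ?_, ?_, ?_⟩
  · -- projections
    intro i
    constructor
    · rw [hedef]; simp only [← map_mul, hproj]
    · rw [hedef]; simp only [← map_star, hsa]
  · -- orthogonality
    intro i j hij
    rw [hedef]
    simp only [← map_mul, Matrix.diagonal_mul_diagonal]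
    have : (fun a => f i a * f j a) = fun _ => (0:ℂ) := by
      funext a
      simp only [hfdef]
      by_cases h1 : (a.val : ZMod k) + i = 0
      · have h2 : ¬ ((a.val : ZMod k) + j = 0) := by
          intro h2
          apply hij
          have := h1.trans h2.symm
          exact add_left_cancel this
        simp [h1, h2]
      · simp [h1]
    rw [this]
    simp
  · -- sum to 1
    rw [hedef]
    simp only
    rw [← map_sum]
    have hsum : ∀ a : Fin (n+1), (∑ i : ZMod k, f i a) = 1 := by
      intro a
      have h1 : ∀ i : ZMod k, f i a = if i = -((a.val : ZMod k)) then 1 else 0 := by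
        intro i
        by_cases h : i = -((a.val : ZMod k))
        · subst h; simp [hfdef]
        · have h0 : ¬((a.val : ZMod k) + i = 0) := fun h0 => h (by linear_combination h0)
          simp [hfdef, h, h0]
      rw [Finset.sum_congr rfl (fun i _ => h1 i), Finset.sum_ite_eq' Finset.univ]
      simp
    have : (∑ i : ZMod k, Matrix.diagonal (f i)) = (1 : Matrix (Fin (n+1)) (Fin (n+1)) ℂ) := by
      ext a b
      rw [Matrix.sum_apply]
      by_cases h : a = b
      · subst h
        simp only [Matrix.diagonal_apply_eq, Matrix.one_apply_eq]
        exact hsum a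
      · simp [Matrix.diagonal_apply_ne _ h, Matrix.one_apply_ne h]
    rw [this, map_one]
  · -- approximate commutation
    intro x hx i
    have hyx := hy x hx
    have hNle : N x hx ≤ N' := Finset.le_sup (f := fun x => N x.1 x.2) (Finset.mem_attach F ⟨x, hx⟩)
    have hcomm : Commute (y x hx) (e i) := by
      rw [hedef]
      exact hN x hx n (le_trans hNle hNn) _
    have key : x * e i - e i * x = (x - y x hx) * e i - e i * (x - y x hx) := by
      rw [sub_mul, mul_sub, hcomm.eq]
      abel
    have hnorm : ‖e i‖ ≤ 1 := by
      apply my_proj_norm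
      · rw [hedef]; simp only [← map_mul, hproj]
      · rw [hedef]; simp only [← map_star, hsa]
    calc ‖x * e i - e i * x‖ = ‖(x - y x hx) * e i - e i * (x - y x hx)‖ := by rw [key]
      _ ≤ ‖(x - y x hx) * e i‖ + ‖e i * (x - y x hx)‖ := norm_sub_le _ _
      _ ≤ ‖x - y x hx‖ * ‖e i‖ + ‖e i‖ * ‖x - y x hx‖ :=
          add_le_add (norm_mul_le _ _) (norm_mul_le _ _)
      _ < ε := by nlinarith [norm_nonneg (x - y x hx), norm_nonneg (e i)]
  · -- exact cyclic permutation by σ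
    intro i
    rw [hedef]
    simp only
    rw [S.shift, my_conj_diag]
    congr 1
    ext a b
    by_cases h : a = b
    · subst h
      simp only [Matrix.diagonal_apply_eq, hfdef, hcast a]
      congr 1
      rw [eq_iff_iff]
      constructor <;> intro h' <;> [skip; skip] <;> linear_combination h'
    · rw [Matrix.diagonal_apply_ne _ h, Matrix.diagonal_apply_ne _ h]
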